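/- Let K_1, K_2, K_3 be pairwise distinct (k+1)-element subsets of {1, …, n} with |K_1 ∪ K_2 ∪ K_3| ≥ k + 3. Then D_{K_1} ∩ D_{K_2} ∩ D_{K_3} has codimension 2 in ℂ^n if and only if both of the following hold: (i) K_i ⊆ K_j ∪ K_m for every permutation (i, j, m) of (1, 2, 3); and (ii) setting T = K_1 ∩ K_2 ∩ K_3, E = ⋂_{r∈T} ker l_r, and W_{ij} = ⋂_{r ∈ K_i ∩ K_j} ker l_r for i ≠ j, the subspace W_{12} + W_{13} + W_{23} is a proper subspace of E. If (i) or (ii) fails, the codimension of D_{K_1} ∩ D_{K_2} ∩ D_{K_3} equals 3. -/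

import Mathlib

open Module Submodule

/-- The subspace `D_J ⊆ ℂ^ι` of translation vectors `x` for which the translated
hyperplanes `{l i = x i}`, `i ∈ J`, have a common point. -/
noncomputable def DD {ι V : Type*} [AddCommGroup V] [Module ℂ V]
    (l : ι → Module.Dual ℂ V) (J : Finset ι) : Submodule ℂ (ι → ℂ) where
  carrier := {x | ∃ y : V, ∀ i ∈ J, x i = l i y}
  add_mem' := by
    rintro a b ⟨y, hy⟩ ⟨z, hz⟩
    exact ⟨y + z, fun i hi => by simp [hy i hi, hz i hi]⟩
  zero_mem' := ⟨0, fun i _ => by simp⟩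
  smul_mem' := by
    rintro c a ⟨y, hy⟩
    exact ⟨c • y, fun i hi => by simp [hy i hi]⟩



section Aux

private lemma finrank_map_add_inf_ker {M N : Type*} [AddCommGroup M] [Module ℂ M]
    [AddCommGroup N] [Module ℂ N] [FiniteDimensional ℂ M]
    (f : M →ₗ[ℂ] N) (p : Submodule ℂ M) :
    finrank ℂ (p.map f) + finrank ℂ ↥(p ⊓ LinearMap.ker f) = finrank ℂ p := by
  have h := LinearMap.finrank_range_add_finrank_ker (f.domRestrict p)
  rw [LinearMap.range_domRestrict, LinearMap.ker_domRestrict] at h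
  have e1 : Submodule.comap p.subtype (LinearMap.ker f)
      = Submodule.comap p.subtype (p ⊓ LinearMap.ker f) := by
    rw [Submodule.comap_inf, Submodule.comap_subtype_self, top_inf_eq]
  rw [e1, (Submodule.comapSubtypeEquivOfLe
    (inf_le_left : p ⊓ LinearMap.ker f ≤ p)).finrank_eq] at h
  exact h

private lemma finrank_map_mkQ' {M : Type*} [AddCommGroup M] [Module ℂ M] [FiniteDimensional ℂ M]
    (p q : Submodule ℂ M) :
    finrank ℂ (p.map q.mkQ) + finrank ℂ q = finrank ℂ ↥(p ⊔ q) := by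
  have h := finrank_map_add_inf_ker q.mkQ (p ⊔ q)
  have hq : q.map q.mkQ = ⊥ :=
    eq_bot_iff.mpr (Submodule.map_le_iff_le_comap.mpr
      (by rw [Submodule.comap_bot, Submodule.ker_mkQ]))
  rw [Submodule.ker_mkQ, inf_eq_right.mpr (le_sup_right : q ≤ p ⊔ q), Submodule.map_sup, hq,
    sup_bot_eq] at h
  exact h

private def prodEquivAux {M N : Type*} [AddCommGroup M] [Module ℂ M] [AddCommGroup N] [Module ℂ N]
    (p : Submodule ℂ M) (q : Submodule ℂ N) : ↥(p.prod q) ≃ₗ[ℂ] (↥p × ↥q) where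
  toFun x := (⟨x.1.1, x.2.1⟩, ⟨x.1.2, x.2.2⟩)
  map_add' _ _ := rfl
  map_smul' _ _ := rfl
  invFun x := ⟨(x.1.1, x.2.1), ⟨x.1.2, x.2.2⟩⟩
  left_inv _ := rfl
  right_inv _ := rfl

private lemma finrank_prod_aux {M N : Type*} [AddCommGroup M] [Module ℂ M] [AddCommGroup N]
    [Module ℂ N] [FiniteDimensional ℂ M] [FiniteDimensional ℂ N]
    (p : Submodule ℂ M) (q : Submodule ℂ N) :
    finrank ℂ ↥(p.prod q) = finrank ℂ p + finrank ℂ q := by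
  rw [(prodEquivAux p q).finrank_eq, Module.finrank_prod]

private lemma surj_pi {V : Type*} [AddCommGroup V] [Module ℂ V] [FiniteDimensional ℂ V]
    {ι : Type*} [Fintype ι] [DecidableEq ι] (f : ι → Module.Dual ℂ V)
    (hf : LinearIndependent ℂ f) : Function.Surjective (LinearMap.pi f) := by
  rw [← LinearMap.range_eq_top]
  by_contra hne
  obtain ⟨ψ, hψ0, hψ⟩ := Submodule.exists_dual_map_eq_bot_of_lt_top
    (lt_top_iff_ne_top.mpr hne) inferInstance
  set c : ι → ℂ := fun r => ψ (fun j => if r = j then (1 : ℂ) else 0) with hc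
  have hψeval : ∀ z : ι → ℂ, ψ z = ∑ r, z r * c r := by
    intro z
    conv_lhs => rw [pi_eq_sum_univ z, map_sum]
    refine Finset.sum_congr rfl fun r _ => ?_
    rw [map_smul, smul_eq_mul]
  have hrel : ∑ r, c r • f r = 0 := by
    ext y
    have hmem : ψ ((LinearMap.pi f) y) ∈ (LinearMap.range (LinearMap.pi f)).map ψ :=
      Submodule.mem_map_of_mem (LinearMap.mem_range_self _ y)
    rw [hψ, Submodule.mem_bot] at hmem
    have := hψeval ((LinearMap.pi f) y)
    rw [hmem] at this
    simp only [LinearMap.pi_apply] at this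
    simp only [LinearMap.sum_apply, LinearMap.smul_apply, smul_eq_mul, LinearMap.zero_apply]
    rw [Finset.sum_congr rfl (fun r _ => mul_comm (c r) (f r y))]
    exact this.symm
  have hc0 := Fintype.linearIndependent_iff.mp hf c hrel
  apply hψ0
  apply LinearMap.ext
  intro z
  rw [hψeval z]
  simp [hc0]

private lemma finrank_biInf_ker {V : Type*} [AddCommGroup V] [Module ℂ V] [FiniteDimensional ℂ V]
    {ι : Type*} [Fintype ι] [DecidableEq ι] (f : ι → Module.Dual ℂ V) (S : Finset ι)
    (hs : Function.Surjective (LinearMap.pi (fun r : S => f r))) :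
    finrank ℂ ↥(⨅ r ∈ S, LinearMap.ker (f r)) + S.card = finrank ℂ V := by
  have h := LinearMap.finrank_range_add_finrank_ker (LinearMap.pi (fun r : S => f r.1))
  rw [LinearMap.range_eq_top.mpr hs, LinearMap.ker_pi, finrank_top,
    Module.finrank_fintype_fun_eq_card, Fintype.card_coe] at h
  have he : (⨅ r : S, LinearMap.ker (f r.1)) = ⨅ r ∈ S, LinearMap.ker (f r) := iInf_subtype
  rw [he] at h
  omega

end Aux
section Geo

variable {k n : ℕ} (l : Fin n → Module.Dual ℂ (Fin k → ℂ))
  (hgen : ∀ S : Finset (Fin n), S.card = k → LinearIndependent ℂ (fun i : S => l i.1))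
  (hkn : k ≤ n)

include hgen hkn in
private lemma indep_small {S : Finset (Fin n)} (hS : S.card ≤ k) :
    LinearIndependent ℂ (fun i : S => l i.1) := by
  obtain ⟨T, hST, -, hT⟩ := Finset.exists_subsuperset_card_eq (Finset.subset_univ S)
    hS (by simpa using hkn)
  have hind := hgen T hT
  have := hind.comp (fun i : S => (⟨i.1, hST i.2⟩ : T))
    (fun a b hab => Subtype.ext (show a.1 = b.1 from congrArg (fun t : T => (t : Fin n)) hab))
  exact this

include hgen hkn in
private lemma dim_iInf {S : Finset (Fin n)} (hS : S.card ≤ k) :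
    finrank ℂ ↥(⨅ r ∈ S, LinearMap.ker (l r)) + S.card = k := by
  have h := finrank_biInf_ker l S (surj_pi _ (indep_small l hgen hkn hS))
  rwa [Module.finrank_fintype_fun_eq_card, Fintype.card_fin] at h

include hgen hkn in
private lemma iInf_bot {S : Finset (Fin n)} (hS : S.card = k + 1) :
    (⨅ r ∈ S, LinearMap.ker (l r)) = ⊥ := by
  obtain ⟨T, hTS, hT⟩ := Finset.exists_subset_card_eq (show k ≤ S.card by omega)
  have hd := dim_iInf l hgen hkn (le_of_eq hT)
  rw [hT] at hd
  have hle : (⨅ r ∈ S, LinearMap.ker (l r)) ≤ ⨅ r ∈ T, LinearMap.ker (l r) :=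
    biInf_mono hTS
  have hz : finrank ℂ ↥(⨅ r ∈ T, LinearMap.ker (l r)) = 0 := by omega
  rw [Submodule.finrank_eq_zero] at hz
  exact le_bot_iff.mp (hz ▸ hle)

private lemma iInf_inf_iInf (A B : Finset (Fin n)) :
    (⨅ r ∈ A, LinearMap.ker (l r)) ⊓ (⨅ r ∈ B, LinearMap.ker (l r))
      = ⨅ r ∈ A ∪ B, LinearMap.ker (l r) := by
  ext x
  simp only [Submodule.mem_inf, Submodule.mem_iInf, LinearMap.mem_ker, Finset.mem_union]
  constructor
  · rintro ⟨h1, h2⟩ r (hr | hr)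
    exacts [h1 r hr, h2 r hr]
  · intro h
    exact ⟨fun r hr => h r (Or.inl hr), fun r hr => h r (Or.inr hr)⟩

include hgen hkn in
private lemma sup_eq_of_card_le {A B : Finset (Fin n)} (hAB : (A ∪ B).card ≤ k) :
    (⨅ r ∈ A, LinearMap.ker (l r)) ⊔ (⨅ r ∈ B, LinearMap.ker (l r))
      = ⨅ r ∈ A ∩ B, LinearMap.ker (l r) := by
  have hA : A.card ≤ k := le_trans (Finset.card_le_card Finset.subset_union_left) hAB
  have hB : B.card ≤ k := le_trans (Finset.card_le_card Finset.subset_union_right) hAB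
  have hI : (A ∩ B).card ≤ k := le_trans (Finset.card_le_card Finset.inter_subset_left) hA
  have hsub : (⨅ r ∈ A, LinearMap.ker (l r)) ⊔ (⨅ r ∈ B, LinearMap.ker (l r))
      ≤ ⨅ r ∈ A ∩ B, LinearMap.ker (l r) :=
    sup_le (biInf_mono fun i hi => Finset.mem_of_mem_inter_left hi)
      (biInf_mono fun i hi => Finset.mem_of_mem_inter_right hi)
  refine Submodule.eq_of_le_of_finrank_le hsub ?_
  have h1 := dim_iInf l hgen hkn hA
  have h2 := dim_iInf l hgen hkn hB
  have h3 := dim_iInf l hgen hkn hAB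
  have h4 := dim_iInf l hgen hkn hI
  have h5 := Submodule.finrank_sup_add_finrank_inf_eq
    (⨅ r ∈ A, LinearMap.ker (l r)) (⨅ r ∈ B, LinearMap.ker (l r))
  rw [iInf_inf_iInf] at h5
  have hcard := Finset.card_union_add_card_inter A B
  omega

end Geo
section Master

private noncomputable def tA (k : ℕ) : ((Fin k → ℂ) × (Fin k → ℂ) × (Fin k → ℂ)) →ₗ[ℂ] (Fin k → ℂ) :=
  LinearMap.fst ℂ (Fin k → ℂ) ((Fin k → ℂ) × (Fin k → ℂ))

private noncomputable def tB (k : ℕ) : ((Fin k → ℂ) × (Fin k → ℂ) × (Fin k → ℂ)) →ₗ[ℂ] (Fin k → ℂ) :=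
  (LinearMap.fst ℂ (Fin k → ℂ) (Fin k → ℂ)).comp
    (LinearMap.snd ℂ (Fin k → ℂ) ((Fin k → ℂ) × (Fin k → ℂ)))

private noncomputable def tC (k : ℕ) : ((Fin k → ℂ) × (Fin k → ℂ) × (Fin k → ℂ)) →ₗ[ℂ] (Fin k → ℂ) :=
  (LinearMap.snd ℂ (Fin k → ℂ) (Fin k → ℂ)).comp
    (LinearMap.snd ℂ (Fin k → ℂ) ((Fin k → ℂ) × (Fin k → ℂ)))

@[simp] private lemma tA_apply (k : ℕ) (x : (Fin k → ℂ) × (Fin k → ℂ) × (Fin k → ℂ)) :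
    tA k x = x.1 := rfl
@[simp] private lemma tB_apply (k : ℕ) (x : (Fin k → ℂ) × (Fin k → ℂ) × (Fin k → ℂ)) :
    tB k x = x.2.1 := rfl
@[simp] private lemma tC_apply (k : ℕ) (x : (Fin k → ℂ) × (Fin k → ℂ) × (Fin k → ℂ)) :
    tC k x = x.2.2 := rfl

private lemma mem_DD {ι V : Type*} [AddCommGroup V] [Module ℂ V] (l : ι → Module.Dual ℂ V)
    (J : Finset ι) (x : ι → ℂ) : x ∈ DD l J ↔ ∃ y, ∀ i ∈ J, x i = l i y := Iff.rfl

set_option maxHeartbeats 1000000 in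
private lemma master {k n : ℕ} (l : Fin n → Module.Dual ℂ (Fin k → ℂ))
    (K₁ K₂ K₃ : Finset (Fin n))
    (hb1 : (⨅ r ∈ K₁, LinearMap.ker (l r)) = ⊥)
    (hb2 : (⨅ r ∈ K₂, LinearMap.ker (l r)) = ⊥)
    (hb3 : (⨅ r ∈ K₃, LinearMap.ker (l r)) = ⊥) :
    finrank ℂ ↥(DD l K₁ ⊓ DD l K₂ ⊓ DD l K₃) + (K₁ ∪ K₂ ∪ K₃).card
        + finrank ℂ ↥((⨅ r ∈ K₁ ∩ K₂, LinearMap.ker (l r)) ⊔ (⨅ r ∈ K₁ ∩ K₃, LinearMap.ker (l r))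
          ⊔ (⨅ r ∈ K₂ ∩ K₃, LinearMap.ker (l r)))
      = n + k + finrank ℂ ↥(⨅ r ∈ K₁ ∩ K₂, LinearMap.ker (l r))
        + finrank ℂ ↥(⨅ r ∈ K₁ ∩ K₃, LinearMap.ker (l r))
        + finrank ℂ ↥(⨅ r ∈ K₂ ∩ K₃, LinearMap.ker (l r)) := by
  classical
  set W12 := ⨅ r ∈ K₁ ∩ K₂, LinearMap.ker (l r) with hW12
  set W13 := ⨅ r ∈ K₁ ∩ K₃, LinearMap.ker (l r) with hW13
  set W23 := ⨅ r ∈ K₂ ∩ K₃, LinearMap.ker (l r) with hW23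
  set Fst := LinearMap.fst ℂ ((Fin k → ℂ) × (Fin k → ℂ) × (Fin k → ℂ)) (Fin n → ℂ) with hFst
  set Snd := LinearMap.snd ℂ ((Fin k → ℂ) × (Fin k → ℂ) × (Fin k → ℂ)) (Fin n → ℂ) with hSnd
  set Ψ := LinearMap.pi (fun i : Fin n =>
    if i ∈ K₁ then (l i).comp ((tA k).comp Fst)
    else if i ∈ K₂ then (l i).comp ((tB k).comp Fst)
    else if i ∈ K₃ then (l i).comp ((tC k).comp Fst)
    else (LinearMap.proj i).comp Snd) with hΨ
  have Ψap : ∀ (p : ((Fin k → ℂ) × (Fin k → ℂ) × (Fin k → ℂ)) × (Fin n → ℂ)) (i : Fin n),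
      Ψ p i = if i ∈ K₁ then l i p.1.1 else if i ∈ K₂ then l i p.1.2.1
        else if i ∈ K₃ then l i p.1.2.2 else p.2 i := by
    intro p i
    rw [hΨ, LinearMap.pi_apply]
    split_ifs <;> rfl
  set Zc := (Submodule.comap (tA k - tB k) W12) ⊓ (Submodule.comap (tA k - tC k) W13)
    ⊓ (Submodule.comap (tB k - tC k) W23) with hZc
  have memZc : ∀ y : ((Fin k → ℂ) × (Fin k → ℂ) × (Fin k → ℂ)),
      y ∈ Zc ↔ (∀ r ∈ K₁ ∩ K₂, l r y.1 = l r y.2.1) ∧ (∀ r ∈ K₁ ∩ K₃, l r y.1 = l r y.2.2)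
        ∧ (∀ r ∈ K₂ ∩ K₃, l r y.2.1 = l r y.2.2) := by
    intro y
    simp only [hZc, Submodule.mem_inf, Submodule.mem_comap, hW12, hW13, hW23,
      Submodule.mem_iInf, LinearMap.mem_ker, LinearMap.sub_apply, tA_apply, tB_apply, tC_apply,
      map_sub, sub_eq_zero, and_assoc]
  have key : DD l K₁ ⊓ DD l K₂ ⊓ DD l K₃ = Submodule.map Ψ (Zc.prod ⊤) := by
    ext x
    simp only [Submodule.mem_inf, mem_DD]
    constructor
    · rintro ⟨⟨⟨y₁, hy₁⟩, y₂, hy₂⟩, y₃, hy₃⟩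
      refine Submodule.mem_map.mpr ⟨((y₁, y₂, y₃), x), Submodule.mem_prod.mpr ⟨?_, trivial⟩, ?_⟩
      · refine (memZc _).mpr ⟨?_, ?_, ?_⟩
        · intro r hr
          rw [← hy₁ r (Finset.mem_of_mem_inter_left hr),
            ← hy₂ r (Finset.mem_of_mem_inter_right hr)]
        · intro r hr
          rw [← hy₁ r (Finset.mem_of_mem_inter_left hr),
            ← hy₃ r (Finset.mem_of_mem_inter_right hr)]
        · intro r hr
          rw [← hy₂ r (Finset.mem_of_mem_inter_left hr),
            ← hy₃ r (Finset.mem_of_mem_inter_right hr)]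
      · funext i
        rw [Ψap]
        split_ifs with h1 h2 h3
        · exact (hy₁ i h1).symm
        · exact (hy₂ i h2).symm
        · exact (hy₃ i h3).symm
        · rfl
    · rintro ⟨⟨⟨y₁, y₂, y₃⟩, z⟩, hmem, rfl⟩
      obtain ⟨hZ, -⟩ := Submodule.mem_prod.mp hmem
      obtain ⟨h12, h13, h23⟩ := (memZc _).mp hZ
      refine ⟨⟨⟨y₁, fun i hi => ?_⟩, ⟨y₂, fun i hi => ?_⟩⟩, ⟨y₃, fun i hi => ?_⟩⟩
      · rw [Ψap, if_pos hi]
      · rw [Ψap]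
        by_cases h1 : i ∈ K₁
        · rw [if_pos h1]
          exact h12 i (Finset.mem_inter.mpr ⟨h1, hi⟩)
        · rw [if_neg h1, if_pos hi]
      · rw [Ψap]
        by_cases h1 : i ∈ K₁
        · rw [if_pos h1]
          exact h13 i (Finset.mem_inter.mpr ⟨h1, hi⟩)
        · rw [if_neg h1]
          by_cases h2 : i ∈ K₂
          · rw [if_pos h2]
            exact h23 i (Finset.mem_inter.mpr ⟨h2, hi⟩)
          · rw [if_neg h2, if_pos hi]
  set Q := ⨅ i ∈ (K₁ ∪ K₂ ∪ K₃)ᶜ,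
    LinearMap.ker (LinearMap.proj (R := ℂ) (φ := fun _ : Fin n => ℂ) i) with hQ
  have hker : (Zc.prod ⊤) ⊓ LinearMap.ker Ψ
      = (⊥ : Submodule ℂ ((Fin k → ℂ) × (Fin k → ℂ) × (Fin k → ℂ))).prod Q := by
    ext p
    obtain ⟨⟨y₁, y₂, y₃⟩, z⟩ := p
    simp only [Submodule.mem_inf, Submodule.mem_prod, Submodule.mem_bot, LinearMap.mem_ker,
      Submodule.mem_top, and_true, true_and]
    constructor
    · rintro ⟨hZ, hΨ0⟩
      obtain ⟨h12, h13, h23⟩ := (memZc _).mp hZ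
      have hco : ∀ i, (if i ∈ K₁ then l i y₁ else if i ∈ K₂ then l i y₂
          else if i ∈ K₃ then l i y₃ else z i) = 0 := by
        intro i
        rw [← Ψap ((y₁, y₂, y₃), z) i, hΨ0]
        rfl
      have hy₁ : y₁ = 0 := by
        have hm : y₁ ∈ ⨅ r ∈ K₁, LinearMap.ker (l r) := by
          simp only [Submodule.mem_iInf, LinearMap.mem_ker]
          intro r hr
          have h := hco r
          rwa [if_pos hr] at h
        rwa [hb1, Submodule.mem_bot] at hm
      have hy₂ : y₂ = 0 := by
        have hm : y₂ ∈ ⨅ r ∈ K₂, LinearMap.ker (l r) := by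
          simp only [Submodule.mem_iInf, LinearMap.mem_ker]
          intro r hr
          by_cases h1 : r ∈ K₁
          · rw [← h12 r (Finset.mem_inter.mpr ⟨h1, hr⟩)]
            have h := hco r
            rwa [if_pos h1] at h
          · have h := hco r
            rwa [if_neg h1, if_pos hr] at h
        rwa [hb2, Submodule.mem_bot] at hm
      have hy₃ : y₃ = 0 := by
        have hm : y₃ ∈ ⨅ r ∈ K₃, LinearMap.ker (l r) := by
          simp only [Submodule.mem_iInf, LinearMap.mem_ker]
          intro r hr
          by_cases h1 : r ∈ K₁
          · rw [← h13 r (Finset.mem_inter.mpr ⟨h1, hr⟩)]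
            have h := hco r
            rwa [if_pos h1] at h
          · by_cases h2 : r ∈ K₂
            · rw [← h23 r (Finset.mem_inter.mpr ⟨h2, hr⟩)]
              have h := hco r
              rwa [if_neg h1, if_pos h2] at h
            · have h := hco r
              rwa [if_neg h1, if_neg h2, if_pos hr] at h
        rwa [hb3, Submodule.mem_bot] at hm
      refine ⟨by simp [hy₁, hy₂, hy₃, Prod.mk_zero_zero], ?_⟩
      simp only [hQ, Submodule.mem_iInf, LinearMap.mem_ker, LinearMap.proj_apply]
      intro i hi
      rw [Finset.mem_compl] at hi
      have hi1 : i ∉ K₁ := fun h => hi (by simp [h])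
      have hi2 : i ∉ K₂ := fun h => hi (by simp [h])
      have hi3 : i ∉ K₃ := fun h => hi (by simp [h])
      have h := hco i
      rwa [if_neg hi1, if_neg hi2, if_neg hi3] at h
    · rintro ⟨h0, hzQ⟩
      have e1 : y₁ = 0 := congrArg (fun t => t.1) h0
      have e2 : y₂ = 0 := congrArg (fun t => t.2.1) h0
      have e3 : y₃ = 0 := congrArg (fun t => t.2.2) h0
      subst e1; subst e2; subst e3
      simp only [hQ, Submodule.mem_iInf, LinearMap.mem_ker, LinearMap.proj_apply] at hzQ
      refine ⟨(memZc _).mpr ⟨fun r _ => rfl, fun r _ => rfl, fun r _ => rfl⟩, ?_⟩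
      funext i
      rw [Ψap]
      simp only [Pi.zero_apply, map_zero]
      split_ifs with h1 h2 h3
      · rfl
      · rfl
      · rfl
      · exact hzQ i (Finset.mem_compl.mpr (by simp [h1, h2, h3]))
  -- rank bookkeeping
  have LM1 := finrank_map_add_inf_ker Ψ (Zc.prod ⊤)
  rw [hker, ← key] at LM1
  rw [finrank_prod_aux, finrank_prod_aux, finrank_bot, finrank_top,
    Module.finrank_fintype_fun_eq_card, Fintype.card_fin, zero_add] at LM1
  have hsurjQ : Function.Surjective (LinearMap.pi
      (fun r : ((K₁ ∪ K₂ ∪ K₃)ᶜ : Finset (Fin n)) =>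
        (LinearMap.proj (R := ℂ) (φ := fun _ : Fin n => ℂ) r.1))) := by
    intro w
    refine ⟨fun i => if h : i ∈ (K₁ ∪ K₂ ∪ K₃)ᶜ then w ⟨i, h⟩ else 0, ?_⟩
    funext r
    simp only [LinearMap.pi_apply, LinearMap.proj_apply, dif_pos r.2]
  have hQrank := finrank_biInf_ker
    (fun i : Fin n => LinearMap.proj (R := ℂ) (φ := fun _ : Fin n => ℂ) i)
    ((K₁ ∪ K₂ ∪ K₃)ᶜ) hsurjQ
  rw [Module.finrank_fintype_fun_eq_card, Fintype.card_fin, ← hQ] at hQrank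
  have hcardc : ((K₁ ∪ K₂ ∪ K₃)ᶜ).card + (K₁ ∪ K₂ ∪ K₃).card = n := by
    have h1 := Finset.card_le_univ (K₁ ∪ K₂ ∪ K₃)
    rw [Finset.card_compl, Fintype.card_fin]
    rw [Fintype.card_fin] at h1
    omega
  -- Zc via the involution
  set A := LinearMap.prod (tA k) (LinearMap.prod (tA k - tB k) (tA k - tC k)) with hA
  have hAA : ∀ x, A (A x) = x := by
    rintro ⟨y₁, y₂, y₃⟩
    simp only [hA, LinearMap.prod_apply, Function.prod, LinearMap.sub_apply, tA_apply, tB_apply,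
      tC_apply, sub_sub_cancel]
  set eA := LinearEquiv.ofLinear A A (LinearMap.ext hAA) (LinearMap.ext hAA) with heA
  set P' := (Submodule.comap (LinearMap.fst ℂ (Fin k → ℂ) (Fin k → ℂ)) W12)
    ⊓ (Submodule.comap (LinearMap.snd ℂ (Fin k → ℂ) (Fin k → ℂ)) W13)
    ⊓ (Submodule.comap (LinearMap.snd ℂ (Fin k → ℂ) (Fin k → ℂ)
        - LinearMap.fst ℂ (Fin k → ℂ) (Fin k → ℂ)) W23) with hP'
  have hmapZc : Submodule.map A Zc = (⊤ : Submodule ℂ (Fin k → ℂ)).prod P' := by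
    ext x
    obtain ⟨y, u, v⟩ := x
    simp only [Submodule.mem_map, Submodule.mem_prod, Submodule.mem_top, true_and, hP',
      Submodule.mem_inf, Submodule.mem_comap, LinearMap.sub_apply, LinearMap.fst_apply,
      LinearMap.snd_apply]
    constructor
    · rintro ⟨⟨z₁, z₂, z₃⟩, hz, heq⟩
      simp only [hZc, Submodule.mem_inf, Submodule.mem_comap, LinearMap.sub_apply, tA_apply,
        tB_apply, tC_apply] at hz
      have e1 : z₁ = y := congrArg (fun t => t.1) heq
      have e2 : z₁ - z₂ = u := congrArg (fun t => t.2.1) heq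
      have e3 : z₁ - z₃ = v := congrArg (fun t => t.2.2) heq
      refine ⟨⟨e2 ▸ hz.1.1, e3 ▸ hz.1.2⟩, ?_⟩
      have e4 : v - u = z₂ - z₃ := by rw [← e2, ← e3]; abel
      rw [e4]
      exact hz.2
    · rintro ⟨⟨hu, hv⟩, hw⟩
      refine ⟨(y, y - u, y - v), ?_, ?_⟩
      · simp only [hZc, Submodule.mem_inf, Submodule.mem_comap, LinearMap.sub_apply, tA_apply,
          tB_apply, tC_apply, sub_sub_cancel]
        refine ⟨⟨hu, hv⟩, ?_⟩
        have e4 : (y - u) - (y - v) = v - u := by abel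
        rw [e4]
        exact hw
      · simp only [hA, LinearMap.prod_apply, Function.prod, LinearMap.sub_apply, tA_apply, tB_apply,
          tC_apply, sub_sub_cancel]
  have hZcrank : k + finrank ℂ ↥P' = finrank ℂ ↥Zc := by
    have h := LinearEquiv.finrank_map_eq eA Zc
    rw [show ((eA : _ ≃ₗ[ℂ] _) : _ →ₗ[ℂ] _) = A from rfl, hmapZc, finrank_prod_aux, finrank_top,
      Module.finrank_fintype_fun_eq_card, Fintype.card_fin] at h
    exact h
  -- P' rank
  set dmap := (LinearMap.snd ℂ (Fin k → ℂ) (Fin k → ℂ))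
    - (LinearMap.fst ℂ (Fin k → ℂ) (Fin k → ℂ)) with hdmap
  have hP'eq : P' = (W12.prod W13) ⊓ LinearMap.ker (W23.mkQ.comp dmap) := by
    rw [LinearMap.ker_comp, Submodule.ker_mkQ, hP']
    have hpe : W12.prod W13 = (Submodule.comap (LinearMap.fst ℂ (Fin k → ℂ) (Fin k → ℂ)) W12)
        ⊓ (Submodule.comap (LinearMap.snd ℂ (Fin k → ℂ) (Fin k → ℂ)) W13) :=
      Submodule.ext fun _ => Iff.rfl
    rw [hpe]
  have LM2 := finrank_map_add_inf_ker (W23.mkQ.comp dmap) (W12.prod W13)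
  rw [← hP'eq] at LM2
  have hmapd : Submodule.map dmap (W12.prod W13) = W13 ⊔ W12 := by
    apply le_antisymm
    · intro x hx
      obtain ⟨⟨u, v⟩, huv, rfl⟩ := Submodule.mem_map.mp hx
      obtain ⟨hu, hv⟩ := Submodule.mem_prod.mp huv
      show v - u ∈ W13 ⊔ W12
      exact Submodule.sub_mem _ (Submodule.mem_sup_left hv) (Submodule.mem_sup_right hu)
    · refine sup_le ?_ ?_
      · intro x hx
        refine Submodule.mem_map.mpr ⟨(0, x),
          Submodule.mem_prod.mpr ⟨Submodule.zero_mem _, hx⟩, ?_⟩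
        show x - 0 = x
        simp
      · intro x hx
        refine Submodule.mem_map.mpr ⟨(-x, 0),
          Submodule.mem_prod.mpr ⟨Submodule.neg_mem _ hx, Submodule.zero_mem _⟩, ?_⟩
        show (0 : Fin k → ℂ) - (-x) = x
        simp
  have hcomp : Submodule.map (W23.mkQ.comp dmap) (W12.prod W13)
      = Submodule.map W23.mkQ (W13 ⊔ W12) := by
    rw [Submodule.map_comp, hmapd]
  rw [hcomp] at LM2
  have LM3 := finrank_map_mkQ' (W13 ⊔ W12) W23
  have hsups : (W13 ⊔ W12) ⊔ W23 = (W12 ⊔ W13) ⊔ W23 := by rw [sup_comm W13 W12]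
  rw [hsups] at LM3
  have hprod1213 : finrank ℂ ↥(W12.prod W13) = finrank ℂ ↥W12 + finrank ℂ ↥W13 :=
    finrank_prod_aux _ _
  rw [hprod1213] at LM2
  omega

end Master

set_option maxHeartbeats 2000000 in
/-- Theorem `proofmain` (2): a triple of distinct hyperplanes `D_{K₁}, D_{K₂},
D_{K₃}` of `B(n,k)` with `|K₁ ∪ K₂ ∪ K₃| ≥ k + 3` intersects in codimension 2 iff
(i) each `Kᵢ` is contained in the union of the other two, and (ii) with `T = K₁ ∩ K₂ ∩ K₃`,
`E = ⋂_{r ∈ T} ker l_r` and `W_{ij} = ⋂_{r ∈ Kᵢ ∩ Kⱼ} ker l_r`, the subspace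
`W₁₂ + W₁₃ + W₂₃` is a proper subspace of `E`; if (i) or (ii) fails the codimension is 3. -/
theorem stmt8 (k n : ℕ) (hk : 0 < k) (hkn : k < n)
    (l : Fin n → Module.Dual ℂ (Fin k → ℂ))
    (hgen : ∀ S : Finset (Fin n), S.card = k → LinearIndependent ℂ (fun i : S => l i.1))
    (K₁ K₂ K₃ : Finset (Fin n))
    (hne₁₂ : K₁ ≠ K₂) (hne₁₃ : K₁ ≠ K₃) (hne₂₃ : K₂ ≠ K₃)
    (hc₁ : K₁.card = k + 1) (hc₂ : K₂.card = k + 1) (hc₃ : K₃.card = k + 1)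
    (hbig : k + 3 ≤ (K₁ ∪ K₂ ∪ K₃).card)
    (E : Submodule ℂ (Fin k → ℂ)) (hE : E = ⨅ r ∈ K₁ ∩ K₂ ∩ K₃, LinearMap.ker (l r))
    (W₁₂ W₁₃ W₂₃ : Submodule ℂ (Fin k → ℂ))
    (hW₁₂ : W₁₂ = ⨅ r ∈ K₁ ∩ K₂, LinearMap.ker (l r))
    (hW₁₃ : W₁₃ = ⨅ r ∈ K₁ ∩ K₃, LinearMap.ker (l r))
    (hW₂₃ : W₂₃ = ⨅ r ∈ K₂ ∩ K₃, LinearMap.ker (l r)) :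
    (Module.finrank ℂ ↥(DD l K₁ ⊓ DD l K₂ ⊓ DD l K₃) = n - 2 ↔
      (K₁ ⊆ K₂ ∪ K₃ ∧ K₂ ⊆ K₁ ∪ K₃ ∧ K₃ ⊆ K₁ ∪ K₂) ∧ W₁₂ ⊔ W₁₃ ⊔ W₂₃ < E) ∧
    (¬((K₁ ⊆ K₂ ∪ K₃ ∧ K₂ ⊆ K₁ ∪ K₃ ∧ K₃ ⊆ K₁ ∪ K₂) ∧ W₁₂ ⊔ W₁₃ ⊔ W₂₃ < E) →
      Module.finrank ℂ ↥(DD l K₁ ⊓ DD l K₂ ⊓ DD l K₃) = n - 3) := by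
  classical
  subst hE hW₁₂ hW₁₃ hW₂₃
  set W12 := ⨅ r ∈ K₁ ∩ K₂, LinearMap.ker (l r) with hW12
  set W13 := ⨅ r ∈ K₁ ∩ K₃, LinearMap.ker (l r) with hW13
  set W23 := ⨅ r ∈ K₂ ∩ K₃, LinearMap.ker (l r) with hW23
  set E := ⨅ r ∈ K₁ ∩ K₂ ∩ K₃, LinearMap.ker (l r) with hEdef
  have hkn' : k ≤ n := le_of_lt hkn
  have hb1 := iInf_bot l hgen hkn' hc₁
  have hb2 := iInf_bot l hgen hkn' hc₂
  have hb3 := iInf_bot l hgen hkn' hc₃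
  have hM := master l K₁ K₂ K₃ hb1 hb2 hb3
  rw [← hW12, ← hW13, ← hW23] at hM
  have hUn : (K₁ ∪ K₂ ∪ K₃).card ≤ n := by
    have h := Finset.card_le_univ (K₁ ∪ K₂ ∪ K₃)
    rwa [Fintype.card_fin] at h
  have hcap : ∀ (Ka Kb : Finset (Fin n)), Ka.card = k + 1 → Kb.card = k + 1 → Ka ≠ Kb →
      (Ka ∩ Kb).card ≤ k := by
    intro Ka Kb hca hcb hne
    by_contra h
    push_neg at h
    have h1 : Ka ∩ Kb = Ka :=
      Finset.eq_of_subset_of_card_le Finset.inter_subset_left (by omega)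
    have h2 : Ka ∩ Kb = Kb :=
      Finset.eq_of_subset_of_card_le Finset.inter_subset_right (by omega)
    exact hne (h1.symm.trans h2)
  have ha12 := hcap K₁ K₂ hc₁ hc₂ hne₁₂
  have ha13 := hcap K₁ K₃ hc₁ hc₃ hne₁₃
  have ha23 := hcap K₂ K₃ hc₂ hc₃ hne₂₃
  have hTsub12 : K₁ ∩ K₂ ∩ K₃ ⊆ K₁ ∩ K₂ := Finset.inter_subset_left
  have htk : (K₁ ∩ K₂ ∩ K₃).card ≤ k :=
    le_trans (Finset.card_le_card hTsub12) ha12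
  have hw12 := dim_iInf l hgen hkn' ha12
  have hw13 := dim_iInf l hgen hkn' ha13
  have hw23 := dim_iInf l hgen hkn' ha23
  have hwE := dim_iInf l hgen hkn' htk
  rw [← hW12] at hw12
  rw [← hW13] at hw13
  rw [← hW23] at hw23
  rw [← hEdef] at hwE
  have hWsubE : W12 ⊔ W13 ⊔ W23 ≤ E := by
    refine sup_le (sup_le ?_ ?_) ?_
    · exact biInf_mono fun i hi => hTsub12 hi
    · refine biInf_mono fun i hi => ?_
      simp only [Finset.mem_inter] at hi ⊢
      exact ⟨hi.1.1, hi.2⟩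
    · refine biInf_mono fun i hi => ?_
      simp only [Finset.mem_inter] at hi ⊢
      exact ⟨hi.1.2, hi.2⟩
  have hwle : finrank ℂ ↥(W12 ⊔ W13 ⊔ W23) ≤ finrank ℂ ↥E := Submodule.finrank_mono hWsubE
  have hT1213 : (K₁ ∩ K₂) ∩ (K₁ ∩ K₃) = K₁ ∩ K₂ ∩ K₃ := by
    ext a; simp only [Finset.mem_inter]; tauto
  have hT1223 : (K₁ ∩ K₂) ∩ (K₂ ∩ K₃) = K₁ ∩ K₂ ∩ K₃ := by
    ext a; simp only [Finset.mem_inter]; tauto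
  have hT1323 : (K₁ ∩ K₃) ∩ (K₂ ∩ K₃) = K₁ ∩ K₂ ∩ K₃ := by
    ext a; simp only [Finset.mem_inter]; tauto
  have hnotsub : ∀ (Ka Kb : Finset (Fin n)), Ka.card = k + 1 → ¬ (Ka ⊆ Kb) →
      (Ka ∩ Kb).card ≤ k := by
    intro Ka Kb hca hns
    by_contra h
    push_neg at h
    have h1 : Ka ∩ Kb = Ka :=
      Finset.eq_of_subset_of_card_le Finset.inter_subset_left (by omega)
    refine hns fun a ha => ?_
    rw [← h1] at ha
    exact Finset.mem_of_mem_inter_right ha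
  have hEW : ¬(K₁ ⊆ K₂ ∪ K₃ ∧ K₂ ⊆ K₁ ∪ K₃ ∧ K₃ ⊆ K₁ ∪ K₂) →
      finrank ℂ ↥(W12 ⊔ W13 ⊔ W23) = finrank ℂ ↥E := by
    intro hni
    have hEle : E ≤ W12 ⊔ W13 ⊔ W23 := by
      rw [not_and_or, not_and_or] at hni
      rcases hni with h | h | h
      · have hd1 : (K₁ ∩ K₂) ∪ (K₁ ∩ K₃) = K₁ ∩ (K₂ ∪ K₃) := by
          ext a; simp only [Finset.mem_inter, Finset.mem_union]; tauto
        have hcard : ((K₁ ∩ K₂) ∪ (K₁ ∩ K₃)).card ≤ k := by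
          rw [hd1]; exact hnotsub K₁ (K₂ ∪ K₃) hc₁ h
        have hsup := sup_eq_of_card_le l hgen hkn' hcard
        rw [hT1213, ← hW12, ← hW13, ← hEdef] at hsup
        rw [← hsup]
        exact le_sup_left
      · have hd2 : (K₁ ∩ K₂) ∪ (K₂ ∩ K₃) = K₂ ∩ (K₁ ∪ K₃) := by
          ext a; simp only [Finset.mem_inter, Finset.mem_union]; tauto
        have hcard : ((K₁ ∩ K₂) ∪ (K₂ ∩ K₃)).card ≤ k := by
          rw [hd2]
          exact hnotsub K₂ (K₁ ∪ K₃) hc₂ h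
        have hsup := sup_eq_of_card_le l hgen hkn' hcard
        rw [hT1223, ← hW12, ← hW23, ← hEdef] at hsup
        rw [← hsup]
        exact sup_le (le_sup_of_le_left le_sup_left) le_sup_right
      · have hd3 : (K₁ ∩ K₃) ∪ (K₂ ∩ K₃) = K₃ ∩ (K₁ ∪ K₂) := by
          ext a; simp only [Finset.mem_inter, Finset.mem_union]; tauto
        have hcard : ((K₁ ∩ K₃) ∪ (K₂ ∩ K₃)).card ≤ k := by
          rw [hd3]
          exact hnotsub K₃ (K₁ ∪ K₂) hc₃ h
        have hsup := sup_eq_of_card_le l hgen hkn' hcard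
        rw [hT1323, ← hW13, ← hW23, ← hEdef] at hsup
        rw [← hsup]
        exact sup_le (le_sup_of_le_left le_sup_right) le_sup_right
    exact le_antisymm hwle (Submodule.finrank_mono hEle)
  have hwge : finrank ℂ ↥E ≤ finrank ℂ ↥(W12 ⊔ W13 ⊔ W23) + 1 := by
    by_cases hcase : ((K₁ ∩ K₂) ∪ (K₁ ∩ K₃)).card ≤ k
    · have hsup := sup_eq_of_card_le l hgen hkn' hcase
      rw [hT1213, ← hW12, ← hW13, ← hEdef] at hsup
      have hle : E ≤ W12 ⊔ W13 ⊔ W23 := by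
        rw [← hsup]; exact le_sup_left
      have := Submodule.finrank_mono hle
      omega
    · have hle : (K₁ ∩ K₂) ∪ (K₁ ∩ K₃) ⊆ K₁ :=
        Finset.union_subset Finset.inter_subset_left Finset.inter_subset_left
      have hcard : ((K₁ ∩ K₂) ∪ (K₁ ∩ K₃)).card ≤ k + 1 := by
        have := Finset.card_le_card hle
        omega
      have hbot : W12 ⊓ W13 = ⊥ := by
        rw [hW12, hW13, iInf_inf_iInf]
        exact iInf_bot l hgen hkn' (by omega)
      have hsupinf := Submodule.finrank_sup_add_finrank_inf_eq W12 W13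
      rw [hbot, finrank_bot] at hsupinf
      have hcui := Finset.card_union_add_card_inter (K₁ ∩ K₂) (K₁ ∩ K₃)
      rw [hT1213] at hcui
      have hmono : finrank ℂ ↥(W12 ⊔ W13) ≤ finrank ℂ ↥(W12 ⊔ W13 ⊔ W23) :=
        Submodule.finrank_mono le_sup_left
      omega
  have hcu1 := Finset.card_union_add_card_inter (K₁ ∪ K₂) K₃
  have hcu2 := Finset.card_union_add_card_inter K₁ K₂
  have hdu : (K₁ ∪ K₂) ∩ K₃ = (K₁ ∩ K₃) ∪ (K₂ ∩ K₃) := by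
    ext a; simp only [Finset.mem_inter, Finset.mem_union]; tauto
  rw [hdu] at hcu1
  have hcu3 := Finset.card_union_add_card_inter (K₁ ∩ K₃) (K₂ ∩ K₃)
  rw [hT1323] at hcu3
  constructor
  · constructor
    · intro hDD
      have hiholds : K₁ ⊆ K₂ ∪ K₃ ∧ K₂ ⊆ K₁ ∪ K₃ ∧ K₃ ⊆ K₁ ∪ K₂ := by
        by_contra hni
        have := hEW hni
        omega
      refine ⟨hiholds, ?_⟩
      have hflt : finrank ℂ ↥(W12 ⊔ W13 ⊔ W23) < finrank ℂ ↥E := by omega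
      refine lt_of_le_of_ne hWsubE fun heq => ?_
      rw [heq] at hflt
      exact lt_irrefl _ hflt
    · rintro ⟨hi, hlt⟩
      have := Submodule.finrank_lt_finrank_of_lt hlt
      omega
  · intro hncond
    have hfe : finrank ℂ ↥(W12 ⊔ W13 ⊔ W23) = finrank ℂ ↥E := by
      rcases not_and_or.mp hncond with h | h
      · exact hEW h
      · rcases lt_or_eq_of_le hWsubE with hlt | heq
        · exact absurd hlt h
        · rw [heq]
    omega
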